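/- If f solves f''' + ((m+1)/2) f f'' - m (f')² = 0 on [α,β], then f(β)f''(β) - f(α)f''(α) - ½(f'(β))² + ½(f'(α))² + ((m+1)/2)(f(β)² f'(β) - f(α)² f'(α)) = (2m+1) ∫_α^β f(t) (f'(t))² dt. -/

import Mathlib

open Real Set Filter Topology MeasureTheory

theorem stmt7 (m α β : ℝ) (hab : α ≤ β) (f f' f'' f''' : ℝ → ℝ)
    (hf : ∀ t ∈ Set.Icc α β, HasDerivWithinAt f (f' t) (Set.Icc α β) t)
    (hf' : ∀ t ∈ Set.Icc α β, HasDerivWithinAt f' (f'' t) (Set.Icc α β) t)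
    (hf'' : ∀ t ∈ Set.Icc α β, HasDerivWithinAt f'' (f''' t) (Set.Icc α β) t)
    (hcont : ContinuousOn f''' (Set.Icc α β))
    (hode : ∀ t ∈ Set.Icc α β,
      f''' t + (m + 1) / 2 * f t * f'' t - m * (f' t) ^ 2 = 0) :
    f β * f'' β - f α * f'' α - 1 / 2 * (f' β) ^ 2 + 1 / 2 * (f' α) ^ 2
      + (m + 1) / 2 * ((f β) ^ 2 * f' β) - (m + 1) / 2 * ((f α) ^ 2 * f' α)
      = (2 * m + 1) * ∫ t in α..β, f t * (f' t) ^ 2 := by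
  set g : ℝ → ℝ := fun t =>
    f t * f'' t - 1 / 2 * (f' t) ^ 2 + (m + 1) / 2 * ((f t) ^ 2 * f' t) with hg
  have hderiv : ∀ t ∈ Set.Icc α β,
      HasDerivWithinAt g ((2 * m + 1) * (f t * (f' t) ^ 2)) (Set.Icc α β) t := by
    intro t ht
    have h1 := ((((hf t ht).mul (hf'' t ht)).sub
        (((hf' t ht).pow 2).const_mul (1 / 2))).add
        ((((hf t ht).pow 2).mul (hf' t ht)).const_mul ((m + 1) / 2)))
    refine h1.congr_deriv ?_
    symm
    have h2 := hode t ht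
    push_cast [Pi.pow_apply]
    linear_combination (- f t) * h2
  have hcf : ContinuousOn f (Set.Icc α β) := fun t ht => (hf t ht).continuousWithinAt
  have hcf' : ContinuousOn f' (Set.Icc α β) := fun t ht => (hf' t ht).continuousWithinAt
  have hcf'' : ContinuousOn f'' (Set.Icc α β) := fun t ht => (hf'' t ht).continuousWithinAt
  have hgc : ContinuousOn g (Set.Icc α β) := by
    apply ContinuousOn.add
    · exact (hcf.mul hcf'').sub (continuousOn_const.mul (hcf'.pow 2))
    · exact continuousOn_const.mul ((hcf.pow 2).mul hcf')
  have hic : ContinuousOn (fun t => (2 * m + 1) * (f t * (f' t) ^ 2)) (Set.Icc α β) :=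
    continuousOn_const.mul (hcf.mul (hcf'.pow 2))
  have hint : IntervalIntegrable (fun t => (2 * m + 1) * (f t * (f' t) ^ 2))
      MeasureTheory.volume α β := by
    apply ContinuousOn.intervalIntegrable
    rwa [Set.uIcc_of_le hab]
  have key := intervalIntegral.integral_eq_sub_of_hasDeriv_right_of_le hab hgc
    (fun x hx => ((hderiv x (Set.mem_Icc_of_Ioo hx)).hasDerivAt
      (Icc_mem_nhds hx.1 hx.2)).hasDerivWithinAt) hint
  rw [intervalIntegral.integral_const_mul] at key
  simp only [hg] at key
  linarith [key]
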